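/- (Rothe–Hagen identity.) Let x, y, z be real numbers and n a natural number such that zi + x ≠ 0 for 0 ≤ i ≤ n, z(n−i) + y ≠ 0 for 0 ≤ i ≤ n, and zn + x + y ≠ 0. Then Σ_{i=0}^{n} [ x/(zi + x) ]·C(zi + x, i) · [ y/(z(n−i) + y) ]·C(z(n−i) + y, n−i) = [ (x+y)/(zn + x + y) ]·C(zn + x + y, n), where for a real number w and a natural number m, C(w, m) = w(w−1)⋯(w−m+1)/m! is the generalized binomial coefficient. -/

import Mathlib

/-- Generalized binomial coefficient `C(w, m) = w(w−1)⋯(w−m+1)/m!` for a real number `w`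
and a natural number `m`, with `C(w, 0) = 1`. -/
noncomputable def genChoose (w : ℝ) (m : ℕ) : ℝ :=
  (∏ i ∈ Finset.range m, (w - i)) / (Nat.factorial m : ℝ)

lemma prod_peel (w : ℝ) (m : ℕ) :
    ∏ j ∈ Finset.range (m+1), (w - j) = w * ∏ j ∈ Finset.range m, (w - 1 - j) := by
  rw [Finset.prod_range_succ']
  simp only [Nat.cast_zero, sub_zero, Nat.cast_add, Nat.cast_one]
  rw [mul_comm]
  congr 1
  exact Finset.prod_congr rfl (fun j _ => by ring)

lemma pascal (w : ℝ) (m : ℕ) :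
    genChoose w (m+1) = genChoose (w-1) (m+1) + genChoose (w-1) m := by
  have hf' : ((m).factorial : ℝ) ≠ 0 := Nat.cast_ne_zero.2 (Nat.factorial_ne_zero _)
  have hfac : ((m+1).factorial : ℝ) = (m+1) * m.factorial := by
    rw [Nat.factorial_succ]; push_cast; ring
  unfold genChoose
  rw [prod_peel, Finset.prod_range_succ, hfac]
  field_simp
  ring

lemma gc_congr {a b : ℝ} (m : ℕ) (h : a = b) : genChoose a m = genChoose b m := by rw [h]

noncomputable def gB (z c : ℝ) (m : ℕ) : ℝ := genChoose (c + m * z) m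

noncomputable def gA (z c : ℝ) : ℕ → ℝ
  | 0 => 1
  | (i+1) => genChoose (c + (i+1) * z) (i+1) - z * genChoose (c + (i+1) * z - 1) i

lemma gA_succ (z c : ℝ) (i : ℕ) :
    gA z c (i+1) = genChoose (c + (i+1) * z) (i+1) - z * genChoose (c + (i+1) * z - 1) i := rfl

lemma genChoose_one (w : ℝ) : genChoose w 1 = w := by simp [genChoose]

lemma gA_zero_left (z : ℝ) (i : ℕ) : gA z 0 (i+1) = 0 := by
  have hf' : ((i).factorial : ℝ) ≠ 0 := Nat.cast_ne_zero.2 (Nat.factorial_ne_zero _)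
  have hfac : ((i+1).factorial : ℝ) = (i+1) * i.factorial := by
    rw [Nat.factorial_succ]; push_cast; ring
  show genChoose (0 + (i+1) * z) (i+1) - z * genChoose (0 + (i+1) * z - 1) i = 0
  unfold genChoose
  rw [prod_peel, sub_eq_zero, hfac]
  field_simp
  ring

lemma gA_rec (z c : ℝ) (i : ℕ) : gA z c (i+1) = gA z (c-1) (i+1) + gA z (c+z-1) i := by
  cases i with
  | zero =>
      show gA z c 1 = gA z (c-1) 1 + 1
      rw [gA_succ, gA_succ]
      simp only [Nat.cast_zero, zero_add, Nat.cast_one, genChoose_one]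
      simp [genChoose]
  | succ k =>
      rw [gA_succ, gA_succ, gA_succ]
      push_cast
      have p1 := pascal (c + (k+1+1) * z) (k+1)
      have p2 := pascal (c + (k+1+1) * z - 1) k
      have e1 : genChoose (c - 1 + ((k:ℝ)+1+1) * z) (k+1+1) = genChoose (c + ((k:ℝ)+1+1) * z - 1) (k+1+1) :=
        gc_congr _ (by ring)
      have e2 : genChoose (c - 1 + ((k:ℝ)+1+1) * z - 1) (k+1) = genChoose (c + ((k:ℝ)+1+1) * z - 1 - 1) (k+1) :=
        gc_congr _ (by ring)
      have e3 : genChoose (c + z - 1 + ((k:ℝ)+1) * z) (k+1) = genChoose (c + ((k:ℝ)+1+1) * z - 1) (k+1) :=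
        gc_congr _ (by ring)
      have e4 : genChoose (c + z - 1 + ((k:ℝ)+1) * z - 1) k = genChoose (c + ((k:ℝ)+1+1) * z - 1 - 1) k :=
        gc_congr _ (by ring)
      rw [e1, e2, e3, e4]
      linear_combination p1 - z * p2

open Polynomial in
noncomputable def pB (c : ℝ) (m : ℕ) : Polynomial ℝ :=
  C ((m.factorial : ℝ)⁻¹) * ∏ j ∈ Finset.range m, (X + C (c - j))

lemma pB_eval (c t : ℝ) (m : ℕ) : (pB c m).eval t = genChoose (t + c) m := by
  simp only [pB, genChoose, Polynomial.eval_mul, Polynomial.eval_C, Polynomial.eval_prod,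
    Polynomial.eval_add, Polynomial.eval_X, div_eq_inv_mul]
  congr 1
  exact Finset.prod_congr rfl (fun j _ => by ring)

open Polynomial in
noncomputable def pA (z : ℝ) : ℕ → Polynomial ℝ
  | 0 => 1
  | (i+1) => pB ((i+1) * z) (i+1) - C z * pB ((i+1) * z - 1) i

lemma pA_eval (z t : ℝ) (i : ℕ) : (pA z i).eval t = gA z t i := by
  cases i with
  | zero => simp [pA, gA]
  | succ k =>
      show (pB ((k+1) * z) (k+1) - Polynomial.C z * pB ((k+1) * z - 1) k).eval t
        = genChoose (t + (k+1) * z) (k+1) - z * genChoose (t + (k+1) * z - 1) k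
      rw [Polynomial.eval_sub, Polynomial.eval_mul, Polynomial.eval_C, pB_eval, pB_eval]
      rw [show t + ((k:ℝ)+1) * z - 1 = t + (((k:ℝ)+1) * z - 1) by ring]

theorem R1 (z : ℝ) : ∀ n : ℕ, ∀ x y : ℝ,
    ∑ i ∈ Finset.range (n+1), gA z x i * gB z y (n-i) = gB z (x+y) n := by
  intro n
  induction n with
  | zero =>
      intro x y
      simp [gA, gB, genChoose]
  | succ n ih =>
      intro x y
      have hshift : ∀ c : ℝ,
          (∑ i ∈ Finset.range (n+2), gA z c i * gB z y (n+1-i))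
            - (∑ i ∈ Finset.range (n+2), gA z (c-1) i * gB z y (n+1-i))
          = gB z (c+y) (n+1) - gB z ((c-1)+y) (n+1) := by
        intro c
        have lhs_eq :
            (∑ i ∈ Finset.range (n+2), gA z c i * gB z y (n+1-i))
              - (∑ i ∈ Finset.range (n+2), gA z (c-1) i * gB z y (n+1-i))
            = ∑ i ∈ Finset.range (n+1), gA z (c+z-1) i * gB z y (n-i) := by
          rw [← Finset.sum_sub_distrib]
          have : ∀ i : ℕ, gA z c i * gB z y (n+1-i) - gA z (c-1) i * gB z y (n+1-i)
              = (gA z c i - gA z (c-1) i) * gB z y (n+1-i) := fun i => by ring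
          simp only [this]
          rw [Finset.sum_range_succ']
          have h0 : (gA z c 0 - gA z (c-1) 0) * gB z y (n+1-0) = 0 := by
            show ((1:ℝ) - 1) * _ = 0; ring
          rw [h0, add_zero]
          apply Finset.sum_congr rfl
          intro i _
          have := gA_rec z c i
          have h1 : gA z c (i+1) - gA z (c-1) (i+1) = gA z (c+z-1) i := by linarith
          rw [h1, Nat.succ_sub_succ]
        rw [lhs_eq, ih (c+z-1) y]
        have hpas := pascal (c + y + ((n:ℝ)+1) * z) n
        unfold gB
        push_cast
        have e1 : genChoose (c - 1 + y + ((n:ℝ)+1) * z) (n+1)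
            = genChoose (c + y + ((n:ℝ)+1) * z - 1) (n+1) := gc_congr _ (by ring)
        have e2 : genChoose (c + z - 1 + y + (n:ℝ) * z) n
            = genChoose (c + y + ((n:ℝ)+1) * z - 1) n := gc_congr _ (by ring)
        rw [e1, e2]
        linarith
      -- the polynomial capturing the difference
      set p : Polynomial ℝ :=
        (∑ i ∈ Finset.range (n+2), pA z i * Polynomial.C (gB z y (n+1-i)))
          - pB (y + ((n:ℝ)+1) * z) (n+1) with hp
      have hpe : ∀ t : ℝ, p.eval t
          = (∑ i ∈ Finset.range (n+2), gA z t i * gB z y (n+1-i)) - gB z (t+y) (n+1) := by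
        intro t
        rw [hp, Polynomial.eval_sub, Polynomial.eval_finset_sum, pB_eval]
        congr 1
        · exact Finset.sum_congr rfl fun i _ => by
            rw [Polynomial.eval_mul, Polynomial.eval_C, pA_eval]
        · unfold gB
          push_cast
          exact gc_congr _ (by ring)
      have hp0 : p.eval 0 = 0 := by
        rw [hpe]
        rw [Finset.sum_range_succ']
        simp only [gA_zero_left, zero_mul, Finset.sum_const_zero, zero_add,
          Nat.sub_zero]
        rw [show gA z 0 0 = 1 from rfl, one_mul, sub_self]
      have hstep : ∀ t : ℝ, p.eval t = p.eval (t-1) := by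
        intro t
        have h1 := hpe t
        have h2 := hpe (t-1)
        have h3 := hshift t
        rw [h1, h2]
        linarith
      have hnat : ∀ m : ℕ, p.eval (m:ℝ) = 0 := by
        intro m
        induction m with
        | zero => simpa using hp0
        | succ k ihk =>
            have := hstep ((k:ℝ)+1)
            rw [show ((k:ℝ)+1) - 1 = (k:ℝ) by ring] at this
            push_cast
            rw [this]; exact ihk
      have hpz : p = 0 := by
        apply Polynomial.eq_zero_of_infinite_isRoot
        apply Set.infinite_of_injective_forall_mem (f := fun m : ℕ => (m:ℝ))
          (hi := fun a b h => Nat.cast_injective h)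
        intro m
        exact hnat m
      have := hpe x
      rw [hpz] at this
      simp only [Polynomial.eval_zero] at this
      linarith [this]

lemma gA_to_gB (z y : ℝ) (k : ℕ) : gA z y (k+1) + z * gB z (y+z-1) k = gB z y (k+1) := by
  rw [gA_succ]
  unfold gB
  push_cast
  have e : genChoose (y + z - 1 + (k:ℝ) * z) k = genChoose (y + ((k:ℝ)+1) * z - 1) k :=
    gc_congr _ (by ring)
  rw [e]
  ring

theorem R2 (z : ℝ) (n : ℕ) (x y : ℝ) :
    ∑ i ∈ Finset.range (n+1), gA z x i * gA z y (n-i) = gA z (x+y) n := by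
  cases n with
  | zero => simp [show gA z x 0 = 1 from rfl, show gA z y 0 = 1 from rfl,
      show gA z (x+y) 0 = 1 from rfl]
  | succ m =>
      have key : (∑ i ∈ Finset.range (m+2), gA z x i * gA z y (m+1-i))
          + z * ∑ i ∈ Finset.range (m+1), gA z x i * gB z (y+z-1) (m-i)
          = ∑ i ∈ Finset.range (m+2), gA z x i * gB z y (m+1-i) := by
        rw [Finset.sum_range_succ (f := fun i => gA z x i * gA z y (m+1-i)),
            Finset.sum_range_succ (f := fun i => gA z x i * gB z y (m+1-i))]
        rw [Nat.sub_self]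
        rw [show gA z y 0 = 1 from rfl, show gB z y 0 = genChoose (y + (0:ℕ) * z) 0 from rfl]
        rw [Finset.mul_sum, add_right_comm, ← Finset.sum_add_distrib]
        have hterm : ∀ i ∈ Finset.range (m+1),
            gA z x i * gA z y (m+1-i) + z * (gA z x i * gB z (y+z-1) (m-i))
            = gA z x i * gB z y (m+1-i) := by
          intro i hi
          have hi' : i ≤ m := Nat.lt_succ_iff.mp (Finset.mem_range.mp hi)
          have h1 : m + 1 - i = (m - i) + 1 := by omega
          rw [h1, ← gA_to_gB z y (m-i)]
          ring
        rw [Finset.sum_congr rfl hterm]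
        simp [genChoose]
      have r1a := R1 z (m+1) x y
      have r1b := R1 z m x (y+z-1)
      rw [show x+(y+z-1) = x+y+z-1 by ring] at r1b
      have hsum : ∑ i ∈ Finset.range (m+2), gA z x i * gA z y (m+1-i)
          = gB z (x+y) (m+1) - z * gB z (x+y+z-1) m := by
        rw [← r1a, ← r1b]
        linarith [key]
      rw [hsum, gA_succ]
      unfold gB
      push_cast
      have e : genChoose (x + y + z - 1 + (m:ℝ) * z) m
          = genChoose (x + y + ((m:ℝ)+1) * z - 1) m := gc_congr _ (by ring)
      rw [e]

lemma gA_eq_div (z c : ℝ) (i : ℕ) (h : z * i + c ≠ 0) :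
    (c / (z * i + c)) * genChoose (z * i + c) i = gA z c i := by
  cases i with
  | zero =>
      have hc : c ≠ 0 := by simpa using h
      simp [show gA z c 0 = 1 from rfl, genChoose, div_mul_eq_mul_div]
      exact hc
  | succ k =>
      have hf : ((k).factorial : ℝ) ≠ 0 := Nat.cast_ne_zero.2 (Nat.factorial_ne_zero _)
      have hfac : ((k+1).factorial : ℝ) = (k+1) * k.factorial := by
        rw [Nat.factorial_succ]; push_cast; ring
      rw [gA_succ]
      have e1 : genChoose (c + ((k:ℝ)+1) * z) (k+1) = genChoose (z * ((k:ℝ)+1) + c) (k+1) :=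
        gc_congr _ (by ring)
      have e2 : genChoose (c + ((k:ℝ)+1) * z - 1) k = genChoose (z * ((k:ℝ)+1) + c - 1) k :=
        gc_congr _ (by ring)
      push_cast
      push_cast at h
      rw [e1, e2]
      unfold genChoose
      rw [prod_peel, hfac]
      field_simp
      ring

/-- The Rothe–Hagen identity: for real `x`, `y`, `z` with nonvanishing denominators,
`Σ_{i=0}^{n} (x/(zi+x))·C(zi+x, i) · (y/(z(n−i)+y))·C(z(n−i)+y, n−i)
  = ((x+y)/(zn+x+y))·C(zn+x+y, n)`. -/
theorem rothe_hagen (x y z : ℝ) (n : ℕ)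
    (hx : ∀ i ≤ n, z * i + x ≠ 0)
    (hy : ∀ i ≤ n, z * ((n : ℝ) - i) + y ≠ 0)
    (hxy : z * n + x + y ≠ 0) :
    ∑ i ∈ Finset.range (n + 1),
        (x / (z * i + x)) * genChoose (z * i + x) i
          * (y / (z * ((n : ℝ) - i) + y)) * genChoose (z * ((n : ℝ) - i) + y) (n - i)
      = ((x + y) / (z * n + x + y)) * genChoose (z * n + x + y) n := by
  have hsum : ∑ i ∈ Finset.range (n + 1),
        (x / (z * i + x)) * genChoose (z * i + x) i
          * (y / (z * ((n : ℝ) - i) + y)) * genChoose (z * ((n : ℝ) - i) + y) (n - i)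
      = ∑ i ∈ Finset.range (n+1), gA z x i * gA z y (n-i) := by
    apply Finset.sum_congr rfl
    intro i hi
    have hi' : i ≤ n := Nat.lt_succ_iff.mp (Finset.mem_range.mp hi)
    have hcast : ((n - i : ℕ) : ℝ) = (n : ℝ) - i := by
      rw [Nat.cast_sub hi']
    have h1 := gA_eq_div z x i (hx i hi')
    have h2 : (y / (z * ((n-i : ℕ) : ℝ) + y)) * genChoose (z * ((n-i:ℕ):ℝ) + y) (n-i)
        = gA z y (n-i) := gA_eq_div z y (n-i) (by rw [hcast]; exact hy i hi')
    rw [hcast] at h2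
    rw [mul_assoc (x / (z * i + x) * genChoose (z * i + x) i), h2, ← h1]
  rw [hsum, R2 z n x y]
  have h3 : ((x+y) / (z * n + (x+y))) * genChoose (z * n + (x+y)) n = gA z (x+y) n :=
    gA_eq_div z (x+y) n (by rw [show z * n + (x+y) = z*n + x + y by ring]; exact hxy)
  rw [show z * (n:ℝ) + x + y = z*n + (x+y) by ring]
  exact h3.symm
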